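/- Let H = A Aᵀ + μ I with A an m×n real matrix and μ > 0, and let g, d, r ∈ ℝ^m satisfy r = H d + g and ‖r‖ ≤ τ μ ‖d‖ for some τ ∈ (0, 1). Then ‖d‖ ≤ (1/(1-τ)) ‖H⁻¹ g‖. -/

import Mathlib

/-- Inexact solve bound: if `H = A Aᵀ + μ I`, `B` is the inverse of `H`,
`r = H d + g` and `‖r‖ ≤ τ μ ‖d‖` with `τ ∈ (0,1)`, then
`‖d‖ ≤ (1/(1-τ)) ‖H⁻¹ g‖`. -/
theorem inexact_direction_bound (m n : ℕ)
    (A : EuclideanSpace ℝ (Fin n) →L[ℝ] EuclideanSpace ℝ (Fin m))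
    (μ τ : ℝ) (hμ : 0 < μ) (hτ : τ ∈ Set.Ioo (0 : ℝ) 1)
    (H B : EuclideanSpace ℝ (Fin m) →L[ℝ] EuclideanSpace ℝ (Fin m))
    (hH : H = A.comp (ContinuousLinearMap.adjoint A) + μ • ContinuousLinearMap.id ℝ _)
    (hB₁ : H.comp B = ContinuousLinearMap.id ℝ _)
    (hB₂ : B.comp H = ContinuousLinearMap.id ℝ _)
    (g d r : EuclideanSpace ℝ (Fin m))
    (hr : r = H d + g) (hres : ‖r‖ ≤ τ * μ * ‖d‖) :
    ‖d‖ ≤ (1 / (1 - τ)) * ‖B g‖ := by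
  obtain ⟨hτ0, hτ1⟩ := hτ
  -- coercivity: μ ‖y‖ ≤ ‖H y‖
  have coer : ∀ y : EuclideanSpace ℝ (Fin m), μ * ‖y‖ ≤ ‖H y‖ := by
    intro y
    have hinner : μ * ‖y‖ ^ 2 ≤ inner ℝ (H y) y := by
      have : (inner ℝ (H y) y : ℝ)
          = ‖(ContinuousLinearMap.adjoint A) y‖ ^ 2 + μ * ‖y‖ ^ 2 := by
        rw [hH]
        simp only [ContinuousLinearMap.add_apply, ContinuousLinearMap.coe_smul',
          Pi.smul_apply, ContinuousLinearMap.coe_id', id_eq, ContinuousLinearMap.comp_apply,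
          inner_add_left, inner_smul_left, RCLike.conj_to_real]
        rw [← ContinuousLinearMap.adjoint_inner_right A]
        rw [real_inner_self_eq_norm_sq, real_inner_self_eq_norm_sq]
      rw [this]
      nlinarith [sq_nonneg ‖(ContinuousLinearMap.adjoint A) y‖]
    have hcs : (inner ℝ (H y) y : ℝ) ≤ ‖H y‖ * ‖y‖ := real_inner_le_norm _ _
    rcases eq_or_ne y 0 with rfl | hy
    · simp
    · have hy' : 0 < ‖y‖ := norm_pos_iff.mpr hy
      have : μ * ‖y‖ ^ 2 ≤ ‖H y‖ * ‖y‖ := hinner.trans hcs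
      nlinarith
  -- d = B r - B g
  have hHd : H d = r - g := by rw [hr]; abel
  have hd : d = B r - B g := by
    have : B (H d) = d := by
      have := congrArg (fun f => f d) hB₂
      simpa using this
    rw [hHd] at this
    rw [← this, map_sub]
  have hBr : μ * ‖B r‖ ≤ ‖r‖ := by
    have : H (B r) = r := by
      have := congrArg (fun f => f r) hB₁
      simpa using this
    calc μ * ‖B r‖ ≤ ‖H (B r)‖ := coer _
      _ = ‖r‖ := by rw [this]
  have h1 : ‖d‖ ≤ ‖B r‖ + ‖B g‖ := by rw [hd]; exact norm_sub_le _ _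
  have h2 : ‖B r‖ ≤ τ * ‖d‖ := by
    have := hBr.trans hres
    nlinarith
  have h3 : (1 - τ) * ‖d‖ ≤ ‖B g‖ := by nlinarith
  rw [div_mul_eq_mul_div, le_div_iff₀ (by linarith)]
  nlinarith
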